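/- Let N ≥ 1, let S ⊆ ℝ^N be compact, let h ∈ B_S, let D_1, …, D_M ⊆ ℝ^N be measurable sets, and let ω_1, …, ω_M ∈ (0,1] with ω_1 + ⋯ + ω_M = 1. Let μ > 0 and 0 < τ < 2/(1 + 2μ). Define \hat{T}_h f = Σ_{m=1}^M ω_m P_S((1 − μτ) f + τ χ_{D_m}(h − f)). Then \hat{T}_h is a Banach contraction on B_S with Lipschitz constant 1 − μτ; consequently \hat{T}_h has a unique fixed point \hat{f}* ∈ B_S, and for every starting point f_0 ∈ B_S the iterates f_{k+1} = \hat{T}_h f_k converge strongly to \hat{f}*. -/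

import Mathlib

open MeasureTheory FourierTransform Filter

noncomputable section

/-- The Hilbert space `L²(ℝᴺ; ℂ)` of square-integrable functions on `ℝᴺ`. -/
abbrev L2Space (N : ℕ) : Type :=
  Lp ℂ 2 (volume : Measure (EuclideanSpace ℝ (Fin N)))

/-- `f ∈ L²(ℝᴺ)` is bandlimited to `S`: its Fourier transform vanishes (a.e.) outside `S`;
equivalently, `f` agrees a.e. with the inverse Fourier transform of an integrable function `F`
vanishing outside `S`. -/
def IsBandlimited {N : ℕ} (S : Set (EuclideanSpace ℝ (Fin N))) (f : L2Space N) : Prop :=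
  ∃ F : EuclideanSpace ℝ (Fin N) → ℂ,
    Integrable F ∧ (∀ k, k ∉ S → F k = 0) ∧
      (f : EuclideanSpace ℝ (Fin N) → ℂ) =ᵐ[volume] 𝓕⁻ F

/-- Multiplication of `f ∈ L²` by the indicator function `χ_D`, as an element of `L²`. -/
def chiMul {N : ℕ} {D : Set (EuclideanSpace ℝ (Fin N))} (hD : MeasurableSet D)
    (f : L2Space N) : L2Space N :=
  ((Lp.memLp f).indicator hD).toLp (D.indicator f)

/-- The orthogonal projection of `L²(ℝᴺ)` onto a closed subspace `K`. -/
def projOf {N : ℕ} (K : Submodule ℂ (L2Space N)) (hK : IsClosed (K : Set (L2Space N))) :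
    L2Space N → L2Space N :=
  haveI : CompleteSpace K := hK.completeSpace_coe
  fun f => (K.orthogonalProjectionOnto f : L2Space N)

/-- The operator `T_h^{(D)} f = P_S (f + χ_D (h − f))` (single region). -/
def Tsingle {N : ℕ} (K : Submodule ℂ (L2Space N)) (hK : IsClosed (K : Set (L2Space N)))
    {D : Set (EuclideanSpace ℝ (Fin N))} (hD : MeasurableSet D)
    (h f : L2Space N) : L2Space N :=
  projOf K hK (f + chiMul hD (h - f))

/-- The regularized operator `T̂_h f = ∑ m, ω m • P_S ((1 − μτ) f + τ χ_{D m} (h − f))`. -/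
def TmultiReg {N : ℕ} (K : Submodule ℂ (L2Space N)) (hK : IsClosed (K : Set (L2Space N)))
    {M : ℕ} {D : Fin M → Set (EuclideanSpace ℝ (Fin N))} (hD : ∀ m, MeasurableSet (D m))
    (ω : Fin M → ℝ) (μ τ : ℝ) (h f : L2Space N) : L2Space N :=
  ∑ m, ω m • projOf K hK ((1 - μ * τ) • f + τ • chiMul (hD m) (h - f))

/-- `chiMul` is compatible with subtraction. -/
lemma chiMul_sub' {N : ℕ} {D : Set (EuclideanSpace ℝ (Fin N))} (hD : MeasurableSet D)
    (u v : L2Space N) : chiMul hD (u - v) = chiMul hD u - chiMul hD v := by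
  apply MeasureTheory.Lp.ext
  have h1 : ⇑(chiMul hD (u - v)) =ᵐ[volume] D.indicator ⇑(u - v) := MemLp.coeFn_toLp _
  have h2 : ⇑(chiMul hD u) =ᵐ[volume] D.indicator ⇑u := MemLp.coeFn_toLp _
  have h3 : ⇑(chiMul hD v) =ᵐ[volume] D.indicator ⇑v := MemLp.coeFn_toLp _
  have h4 := Lp.coeFn_sub u v
  have h5 := Lp.coeFn_sub (chiMul hD u) (chiMul hD v)
  filter_upwards [h1, h2, h3, h4, h5] with x e1 e2 e3 e4 e5
  rw [e1, e5, Pi.sub_apply, e2, e3]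
  by_cases hx : x ∈ D
  · rw [Set.indicator_of_mem hx, Set.indicator_of_mem hx, Set.indicator_of_mem hx, e4]
    rfl
  · rw [Set.indicator_of_notMem hx, Set.indicator_of_notMem hx,
      Set.indicator_of_notMem hx, sub_zero]

/-- The key pointwise-to-`L²` contraction estimate. -/
lemma key_norm_le {N : ℕ} {D : Set (EuclideanSpace ℝ (Fin N))} (hD : MeasurableSet D)
    {μ τ : ℝ} (hμ : 0 < μ) (hτ0 : 0 < τ) (hτ : τ < 2 / (1 + 2 * μ)) (v : L2Space N) :
    ‖(1 - μ * τ) • v - τ • chiMul hD v‖ ≤ (1 - μ * τ) * ‖v‖ := by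
  have hden : (0 : ℝ) < 1 + 2 * μ := by linarith
  have hτ2 : τ * (1 + 2 * μ) < 2 := by
    rw [div_eq_mul_inv] at hτ
    calc τ * (1 + 2 * μ) < 2 / (1 + 2 * μ) * (1 + 2 * μ) := by
          apply mul_lt_mul_of_pos_right _ hden
          rwa [div_eq_mul_inv]
      _ = 2 := by field_simp
  have ha : 0 ≤ 1 - μ * τ := by nlinarith
  have key : ‖(1 - μ * τ) • v - τ • chiMul hD v‖ ≤ ‖(1 - μ * τ) • v‖ := by
    apply MeasureTheory.Lp.norm_le_norm_of_ae_le
    have h1 := Lp.coeFn_sub ((1 - μ * τ) • v) (τ • chiMul hD v)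
    have h2 := Lp.coeFn_smul (1 - μ * τ) v
    have h3 := Lp.coeFn_smul τ (chiMul hD v)
    have h4 : ⇑(chiMul hD v) =ᵐ[volume] D.indicator ⇑v := MemLp.coeFn_toLp _
    filter_upwards [h1, h2, h3, h4] with x e1 e2 e3 e4
    rw [e1, Pi.sub_apply, e2, e3, Pi.smul_apply, Pi.smul_apply, e4]
    by_cases hx : x ∈ D
    · rw [Set.indicator_of_mem hx, ← sub_smul]
      rw [norm_smul, norm_smul]
      apply mul_le_mul_of_nonneg_right _ (norm_nonneg _)
      rw [Real.norm_eq_abs, Real.norm_eq_abs, abs_of_nonneg ha, abs_le]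
      constructor <;> nlinarith
    · rw [Set.indicator_of_notMem hx, smul_zero, sub_zero]
  calc ‖(1 - μ * τ) • v - τ • chiMul hD v‖ ≤ ‖(1 - μ * τ) • v‖ := key
    _ = (1 - μ * τ) * ‖v‖ := by rw [norm_smul, Real.norm_eq_abs, abs_of_nonneg ha]

/-- The projection does not increase norms. -/
lemma projOf_norm_le {N : ℕ} (K : Submodule ℂ (L2Space N))
    (hK : IsClosed (K : Set (L2Space N))) (x : L2Space N) : ‖projOf K hK x‖ ≤ ‖x‖ := by
  haveI : CompleteSpace K := hK.completeSpace_coe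
  have := Submodule.orthogonalProjectionOnto_norm_le K
  calc ‖projOf K hK x‖ = ‖K.orthogonalProjectionOnto x‖ := rfl
    _ ≤ ‖K.orthogonalProjectionOnto‖ * ‖x‖ := (K.orthogonalProjectionOnto).le_opNorm x
    _ ≤ 1 * ‖x‖ := mul_le_mul_of_nonneg_right this (norm_nonneg _)
    _ = ‖x‖ := one_mul _

lemma projOf_sub {N : ℕ} (K : Submodule ℂ (L2Space N))
    (hK : IsClosed (K : Set (L2Space N))) (x y : L2Space N) :
    projOf K hK x - projOf K hK y = projOf K hK (x - y) := by
  haveI : CompleteSpace K := hK.completeSpace_coe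
  show ((K.orthogonalProjectionOnto x : K) : L2Space N) - ((K.orthogonalProjectionOnto y : K) : L2Space N)
      = ((K.orthogonalProjectionOnto (x - y) : K) : L2Space N)
  rw [← Submodule.coe_sub, ← map_sub]

lemma projOf_mem {N : ℕ} (K : Submodule ℂ (L2Space N))
    (hK : IsClosed (K : Set (L2Space N))) (x : L2Space N) : projOf K hK x ∈ K := by
  haveI : CompleteSpace K := hK.completeSpace_coe
  exact SetLike.coe_mem _

/-- For `h ∈ B_S`, measurable sets `D_1, …, D_M`, convex weights
`ω_m ∈ (0,1]` with `∑ ω_m = 1`, `μ > 0` and `0 < τ < 2/(1 + 2μ)`, the regularized operator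
`T̂_h f = ∑ m, ω_m P_S((1 − μτ) f + τ χ_{D_m}(h − f))` is a Banach contraction on `B_S` with
Lipschitz constant `1 − μτ`; consequently it has a unique fixed point `f̂* ∈ B_S`, and for
every starting point `f_0 ∈ B_S` the iterates `f_{k+1} = T̂_h f_k` converge strongly
to `f̂*`. -/
theorem regularized_contraction_multi (N : ℕ) (hN : 1 ≤ N)
    (S : Set (EuclideanSpace ℝ (Fin N))) (hS : IsCompact S)
    (K : Submodule ℂ (L2Space N))
    (hKset : (K : Set (L2Space N)) = {f : L2Space N | IsBandlimited S f})
    (hK : IsClosed (K : Set (L2Space N)))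
    (h : L2Space N) (hh : IsBandlimited S h)
    (M : ℕ) (D : Fin M → Set (EuclideanSpace ℝ (Fin N))) (hD : ∀ m, MeasurableSet (D m))
    (ω : Fin M → ℝ) (hω : ∀ m, ω m ∈ Set.Ioc (0 : ℝ) 1) (hωsum : ∑ m, ω m = 1)
    (μ τ : ℝ) (hμ : 0 < μ) (hτ0 : 0 < τ) (hτ : τ < 2 / (1 + 2 * μ)) :
    (∀ f g : L2Space N, IsBandlimited S f → IsBandlimited S g →
        ‖TmultiReg K hK hD ω μ τ h f - TmultiReg K hK hD ω μ τ h g‖ ≤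
          (1 - μ * τ) * ‖f - g‖) ∧
      ∃ fstar : L2Space N, IsBandlimited S fstar ∧
        TmultiReg K hK hD ω μ τ h fstar = fstar ∧
        (∀ g : L2Space N, IsBandlimited S g → TmultiReg K hK hD ω μ τ h g = g → g = fstar) ∧
        ∀ f : ℕ → L2Space N, IsBandlimited S (f 0) →
          (∀ k : ℕ, f (k + 1) = TmultiReg K hK hD ω μ τ h (f k)) →
            Tendsto f atTop (nhds fstar) := by
  classical
  haveI : CompleteSpace K := hK.completeSpace_coe
  haveI : Nonempty K := ⟨0⟩
  set T := TmultiReg K hK hD ω μ τ h with hT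
  have hden : (0 : ℝ) < 1 + 2 * μ := by linarith
  have hτ2 : τ * (1 + 2 * μ) < 2 := by
    calc τ * (1 + 2 * μ) < 2 / (1 + 2 * μ) * (1 + 2 * μ) := mul_lt_mul_of_pos_right hτ hden
      _ = 2 := by field_simp
  have ha : 0 ≤ 1 - μ * τ := by nlinarith
  have hc1 : 1 - μ * τ < 1 := by nlinarith
  have hmemBL : ∀ f : L2Space N, IsBandlimited S f ↔ f ∈ K := by
    intro f
    rw [← SetLike.mem_coe, hKset]
    rfl
  have hcontr : ∀ f g : L2Space N, ‖T f - T g‖ ≤ (1 - μ * τ) * ‖f - g‖ := by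
    intro f g
    have hdiff : T f - T g = ∑ m, ω m •
        projOf K hK ((1 - μ * τ) • (f - g) - τ • chiMul (hD m) (f - g)) := by
      rw [hT]
      unfold TmultiReg
      rw [← Finset.sum_sub_distrib]
      refine Finset.sum_congr rfl fun m _ => ?_
      rw [← smul_sub, projOf_sub]
      congr 1
      rw [chiMul_sub' (hD m) h f, chiMul_sub' (hD m) h g, chiMul_sub' (hD m) f g,
        smul_sub, smul_sub, smul_sub, smul_sub]
      abel_nf
    rw [hdiff]
    calc ‖∑ m, ω m • projOf K hK ((1 - μ * τ) • (f - g) - τ • chiMul (hD m) (f - g))‖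
        ≤ ∑ m, ‖ω m • projOf K hK ((1 - μ * τ) • (f - g) - τ • chiMul (hD m) (f - g))‖ :=
          norm_sum_le _ _
      _ ≤ ∑ m, ω m * ((1 - μ * τ) * ‖f - g‖) := by
          refine Finset.sum_le_sum fun m _ => ?_
          rw [norm_smul, Real.norm_eq_abs, abs_of_pos (hω m).1]
          exact mul_le_mul_of_nonneg_left
            ((projOf_norm_le K hK _).trans (key_norm_le (hD m) hμ hτ0 hτ _)) (hω m).1.le
      _ = (1 - μ * τ) * ‖f - g‖ := by rw [← Finset.sum_mul, hωsum, one_mul]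
  have hTK : ∀ f : L2Space N, T f ∈ K := fun f =>
    Submodule.sum_mem K fun m _ => Submodule.smul_of_tower_mem K _ (projOf_mem K hK _)
  let φ : K → K := fun x => ⟨T x, hTK x⟩
  have hφ : ContractingWith ⟨1 - μ * τ, ha⟩ φ := by
    constructor
    · exact_mod_cast hc1
    · refine LipschitzWith.of_dist_le_mul fun x y => ?_
      rw [Subtype.dist_eq, Subtype.dist_eq, dist_eq_norm, dist_eq_norm]
      exact hcontr x y
  refine ⟨fun f g _ _ => hcontr f g, (ContractingWith.fixedPoint φ hφ : K), ?_, ?_, ?_, ?_⟩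
  · exact (hmemBL _).mpr (SetLike.coe_mem _)
  · exact congrArg Subtype.val hφ.fixedPoint_isFixedPt
  · intro g hg hfix
    have hgK : g ∈ K := (hmemBL g).mp hg
    have : Function.IsFixedPt φ ⟨g, hgK⟩ := Subtype.ext hfix
    exact congrArg Subtype.val (hφ.fixedPoint_unique this)
  · intro f hf0 hrec
    have hmem : ∀ k, f k ∈ K := by
      intro k
      induction k with
      | zero => exact (hmemBL _).mp hf0
      | succ k ih => rw [hrec k]; exact hTK _
    have hiter : ∀ k, f k = ((φ^[k] ⟨f 0, hmem 0⟩ : K) : L2Space N) := by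
      intro k
      induction k with
      | zero => rfl
      | succ k ih =>
        rw [Function.iterate_succ_apply', hrec k, ih]
    have h1 := hφ.tendsto_iterate_fixedPoint (⟨f 0, hmem 0⟩ : K)
    have h2 := (continuous_subtype_val.tendsto _).comp h1
    rw [funext hiter]
    exact h2
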